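/- Let f, g : [−1;2] → ℝ² be continuous with a common modulus of uniform continuity md, let I = [a_I;b_I], J ⊆ [−1;2] be closed intervals with α_IJ > 0, and let a_I < c < b_I with f(c) ∉ g(J). Set I₁ := [a_I;c] and I₂ := [c;b_I]. Then π(f|_I, g|_J) = (π(f|_{I₁}, g|_J) + π(f|_{I₂}, g|_J)) mod 2. -/

import Mathlib

noncomputable section

abbrev Plane := EuclideanSpace ℝ (Fin 2)

def pt (a b : ℝ) : Plane := WithLp.toLp 2 ![a, b]

def unitSquare : Set Plane := {z | z 0 ∈ Set.Icc (0:ℝ) 1 ∧ z 1 ∈ Set.Icc (0:ℝ) 1}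

structure Track where
  k : ℕ
  s : ℕ → ℝ
  x : ℕ → Plane
  mono : ∀ i < k, s i < s (i + 1)
  ne : ∀ i < k, x i ≠ x (i + 1)

def Track.seg (p : Track) (t : ℝ) : ℕ := sSup {i | i < p.k ∧ p.s i ≤ t}

def Track.path (p : Track) (t : ℝ) : Plane :=
  p.x (p.seg t) + ((t - p.s (p.seg t)) / (p.s (p.seg t + 1) - p.s (p.seg t))) •
    (p.x (p.seg t + 1) - p.x (p.seg t))

def Track.rangeSet (p : Track) : Set Plane := p.path '' Set.Icc (p.s 0) (p.s p.k)

def Track.V (p : Track) : Set Plane := {z | ∃ i ≤ p.k, z = p.x i}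

def line (x y : Plane) : Set Plane := (affineSpan ℝ {x, y} : Set Plane)

def Track.L (p : Track) : Set Plane := {z | ∃ i < p.k, z ∈ line (p.x i) (p.x (i + 1))}

def Track.Lbar (p : Track) : Set Plane :=
  {z | ∃ i ≤ p.k, ∃ j ≤ p.k, p.x i ≠ p.x j ∧ z ∈ line (p.x i) (p.x j)}

def IsSegSet (S : Set Plane) : Prop := ∃ x y : Plane, x ≠ y ∧ S = segment ℝ x y

def NoCommonSegment (p q : Track) : Prop :=
  ¬ ∃ S : Set Plane, IsSegSet S ∧ S ⊆ p.rangeSet ∧ S ⊆ q.rangeSet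

def WSep (p q : Track) : Prop := p.V ∩ q.L = ∅ ∧ q.V ∩ p.L = ∅

def IsInter (p q : Track) (s t : ℝ) : Prop :=
  p.s 0 < s ∧ s < p.s p.k ∧ q.s 0 < t ∧ t < q.s q.k ∧ p.path s = q.path t

def Admissible (p q : Track) (x : Plane) (δ : ℝ) : Prop :=
  0 < δ ∧ ∀ v ∈ p.V ∪ q.V, v ∈ Metric.ball x δ → v = x

def entryParam (p : Track) (s δ : ℝ) (x : Plane) : ℝ :=
  sInf {s' | s' < s ∧ p.path '' Set.Icc s' s ⊆ Metric.ball x δ}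

def exitParam (p : Track) (s δ : ℝ) (x : Plane) : ℝ :=
  sSup {s' | s < s' ∧ p.path '' Set.Icc s s' ⊆ Metric.ball x δ}

def Alternates (x : Plane) (δ : ℝ) (a b c d : Plane) : Prop :=
  c ∈ Metric.sphere x δ \ {a, b} ∧ d ∈ Metric.sphere x δ \ {a, b} ∧
  connectedComponentIn (Metric.sphere x δ \ {a, b}) c ≠
    connectedComponentIn (Metric.sphere x δ \ {a, b}) d

def CrossAt (p q : Track) (s t δ : ℝ) : Prop :=
  Alternates (p.path s) δ
    (p.path (entryParam p s δ (p.path s))) (p.path (exitParam p s δ (p.path s)))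
    (q.path (entryParam q t δ (p.path s))) (q.path (exitParam q t δ (p.path s)))

def IsCrossing (p q : Track) (s t : ℝ) : Prop :=
  IsInter p q s t ∧ ∃ δ : ℝ, Admissible p q (p.path s) δ ∧ CrossAt p q s t δ

def CN (p q : Track) : ℕ := {st : ℝ × ℝ | IsCrossing p q st.1 st.2}.ncard

def par (p q : Track) : ℕ := CN p q % 2

def ds (A B : Set Plane) : ℝ := sInf {r | ∃ a ∈ A, ∃ b ∈ B, r = ‖a - b‖}

def alphaIJ (f g : ℝ → Plane) (aI bI aJ bJ : ℝ) : ℝ :=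
  min (ds {f aI, f bI} (g '' Set.Icc aJ bJ)) (ds {g aJ, g bJ} (f '' Set.Icc aI bI))

def IsModulus2 (f g : ℝ → Plane) (md : ℕ → ℕ) : Prop :=
  Monotone md ∧ ∀ n : ℕ, ∀ t ∈ Set.Icc (-1:ℝ) 2, ∀ t' ∈ Set.Icc (-1:ℝ) 2,
    |t - t'| < (2:ℝ) ^ (-(md n : ℤ)) →
    ‖f t - f t'‖ < (2:ℝ) ^ (-(n : ℤ)) ∧ ‖g t - g t'‖ < (2:ℝ) ^ (-(n : ℤ))

def IsApprox (f : ℝ → Plane) (md : ℕ → ℕ) (a b : ℝ) (n : ℕ) (p : Track) : Prop :=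
  p.s 0 = a ∧ p.s p.k = b ∧
  (∀ i < p.k, p.s (i + 1) - p.s i < (2:ℝ) ^ (-(md n : ℤ))) ∧
  (∀ i ≤ p.k, ‖f (p.s i) - p.x i‖ < (2:ℝ) ^ (-(n : ℤ)))

def ParityIs (f g : ℝ → Plane) (md : ℕ → ℕ) (aI bI aJ bJ : ℝ) (b : ℕ) : Prop :=
  ∀ n : ℕ, (2:ℝ) ^ (-(n : ℤ)) < alphaIJ f g aI bI aJ bJ / 16 →
    ∀ p q : Track, IsApprox f md aI bI n p → IsApprox g md aJ bJ n q → WSep p q →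
      par p q = b

def IsModulus1 (f : ℝ → Plane) (md : ℕ → ℕ) : Prop :=
  Monotone md ∧ ∀ n : ℕ, ∀ t ∈ Set.Icc (-1:ℝ) 2, ∀ t' ∈ Set.Icc (-1:ℝ) 2,
    |t - t'| < (2:ℝ) ^ (-(md n : ℤ)) → ‖f t - f t'‖ < (2:ℝ) ^ (-(n : ℤ))

def nbhdU (A : Set Plane) (δ : ℝ) : Set Plane := {x | ∃ y ∈ A, ‖x - y‖ < δ}

def extF (φ : ℝ → Plane) (t : ℝ) : Plane :=
  if t ≤ 0 then pt t 0 else if t ≤ 1 then φ t else pt t 1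

def extG (ψ : ℝ → Plane) (t : ℝ) : Plane :=
  if t ≤ 0 then pt t 1 else if t ≤ 1 then ψ t else pt t 0

namespace Track

lemma s_lt_s (p : Track) : ∀ i j, i < j → j ≤ p.k → p.s i < p.s j := by
  intro i j hij hjk
  induction j with
  | zero => omega
  | succ m ih =>
    rcases Nat.lt_succ_iff_lt_or_eq.mp hij with h | h
    · exact lt_trans (ih h (by omega)) (p.mono m (by omega))
    · subst h; exact p.mono i (by omega)

lemma s_le_s (p : Track) {i j : ℕ} (hij : i ≤ j) (hjk : j ≤ p.k) : p.s i ≤ p.s j := by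
  rcases Nat.lt_or_ge i j with h | h
  · exact le_of_lt (p.s_lt_s i j h hjk)
  · have : i = j := le_antisymm hij h
    rw [this]

lemma seg_spec (p : Track) {t : ℝ} (h0 : p.s 0 ≤ t) (hk : t < p.s p.k) :
    p.seg t < p.k ∧ p.s (p.seg t) ≤ t ∧ t < p.s (p.seg t + 1) := by
  have hkpos : 0 < p.k := by
    rcases Nat.eq_zero_or_pos p.k with h | h
    · rw [h] at hk; linarith
    · exact h
  have hbdd : BddAbove {i | i < p.k ∧ p.s i ≤ t} := ⟨p.k, fun i hi => le_of_lt hi.1⟩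
  have hne : ({i | i < p.k ∧ p.s i ≤ t}).Nonempty := ⟨0, hkpos, h0⟩
  have hmem : p.seg t ∈ {i | i < p.k ∧ p.s i ≤ t} := Nat.sSup_mem hne hbdd
  obtain ⟨h1, h2⟩ := hmem
  refine ⟨h1, h2, ?_⟩
  by_contra hcon
  push_neg at hcon
  rcases Nat.lt_or_ge (p.seg t + 1) p.k with h | h
  · have : p.seg t + 1 ≤ p.seg t := le_csSup hbdd ⟨h, hcon⟩
    omega
  · have hEq : p.seg t + 1 = p.k := by omega
    rw [hEq] at hcon; linarith

lemma seg_eq (p : Track) {t : ℝ} {i : ℕ} (hik : i < p.k) (h1 : p.s i ≤ t)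
    (h2 : t < p.s (i + 1)) : p.seg t = i := by
  have h0 : p.s 0 ≤ t := le_trans (p.s_le_s (Nat.zero_le i) (le_of_lt hik)) h1
  have hk : t < p.s p.k := lt_of_lt_of_le h2 (p.s_le_s hik le_rfl)
  obtain ⟨hs1, hs2, hs3⟩ := p.seg_spec h0 hk
  rcases Nat.lt_trichotomy (p.seg t) i with h | h | h
  · exfalso
    have : p.s (p.seg t + 1) ≤ p.s i := p.s_le_s (by omega) (le_of_lt hik)
    linarith
  · exact h
  · exfalso
    have : p.s (i + 1) ≤ p.s (p.seg t) := p.s_le_s (by omega) (le_of_lt hs1)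
    linarith

lemma path_piece (p : Track) {t : ℝ} {i : ℕ} (hik : i < p.k) (h1 : p.s i ≤ t)
    (h2 : t < p.s (i + 1)) :
    p.path t = p.x i + ((t - p.s i) / (p.s (i + 1) - p.s i)) • (p.x (i + 1) - p.x i) := by
  unfold Track.path
  rw [p.seg_eq hik h1 h2]

lemma path_vertex (p : Track) {i : ℕ} (hik : i < p.k) : p.path (p.s i) = p.x i := by
  rw [p.path_piece hik le_rfl (p.mono i hik)]
  simp

end Track

lemma left_mem_line (x y : Plane) : x ∈ line x y :=
  subset_affineSpan ℝ _ (by simp)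

lemma right_mem_line (x y : Plane) : y ∈ line x y :=
  subset_affineSpan ℝ _ (by simp)

lemma line_comm (x y : Plane) : line x y = line y x := by
  unfold line; rw [Set.pair_comm]

lemma direction_line (x y : Plane) :
    (affineSpan ℝ {x, y} : AffineSubspace ℝ Plane).direction = ℝ ∙ (x - y) := by
  rw [direction_affineSpan, vectorSpan_pair, vsub_eq_sub]

lemma span_singleton_eq_of_mem {u v : Plane} (hv : v ∈ (ℝ ∙ u : Submodule ℝ Plane))
    (hv0 : v ≠ 0) : (ℝ ∙ v : Submodule ℝ Plane) = ℝ ∙ u := by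
  obtain ⟨c, rfl⟩ := Submodule.mem_span_singleton.mp hv
  have hc : c ≠ 0 := by rintro rfl; simp at hv0
  ext w
  simp only [Submodule.mem_span_singleton]
  constructor
  · rintro ⟨d, rfl⟩; exact ⟨d * c, by rw [mul_smul]⟩
  · rintro ⟨d, rfl⟩
    refine ⟨d / c, ?_⟩
    rw [smul_smul, div_mul_cancel₀ _ hc]

lemma line_eq_of {x y z w : Plane} (hxy : x ≠ y) (hzw : z ≠ w)
    (hz : z ∈ line x y) (hw : w ∈ line x y) : line z w = line x y := by
  have hdir : (affineSpan ℝ {x, y} : AffineSubspace ℝ Plane).direction = ℝ ∙ (x - y) :=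
    direction_line x y
  have hdir2 : (affineSpan ℝ {z, w} : AffineSubspace ℝ Plane).direction = ℝ ∙ (z - w) :=
    direction_line z w
  have hzw' : z - w ∈ (ℝ ∙ (x - y) : Submodule ℝ Plane) := by
    rw [← hdir, ← vsub_eq_sub]
    exact AffineSubspace.vsub_mem_direction hz hw
  have hspan : (ℝ ∙ (z - w) : Submodule ℝ Plane) = ℝ ∙ (x - y) :=
    span_singleton_eq_of_mem hzw' (sub_ne_zero.mpr hzw)
  have h1 : affineSpan ℝ ({z, w} : Set Plane) ≤ affineSpan ℝ ({x, y} : Set Plane) := by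
    rw [affineSpan_le]
    intro a ha
    rcases ha with rfl | ha
    · exact hz
    · rcases ha with rfl; exact hw
  have key : ∀ a ∈ affineSpan ℝ ({x, y} : Set Plane), a ∈ affineSpan ℝ ({z, w} : Set Plane) := by
    intro a ha
    have hmemdir : a - z ∈ (affineSpan ℝ ({z, w} : Set Plane)).direction := by
      rw [hdir2, hspan, ← hdir, ← vsub_eq_sub]
      exact AffineSubspace.vsub_mem_direction ha hz
    have : (a - z) +ᵥ z ∈ affineSpan ℝ ({z, w} : Set Plane) :=
      AffineSubspace.vadd_mem_of_mem_direction hmemdir (left_mem_line z w)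
    simpa using this
  have h2 : affineSpan ℝ ({x, y} : Set Plane) ≤ affineSpan ℝ ({z, w} : Set Plane) := key
  unfold line
  rw [le_antisymm h1 h2]
lemma line_ne_top (a b : Plane) : (affineSpan ℝ ({a, b} : Set Plane)) ≠ ⊤ := by
  intro h
  have hd : (affineSpan ℝ ({a, b} : Set Plane)).direction = ⊤ := by
    rw [h]; exact AffineSubspace.direction_top ℝ Plane Plane
  rw [direction_line] at hd
  have h1 : Module.finrank ℝ (ℝ ∙ (a - b) : Submodule ℝ Plane) ≤ 1 := by
    rcases eq_or_ne (a - b) 0 with h0 | h0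
    · rw [h0, Submodule.span_zero_singleton]
      simp
    · rw [finrank_span_singleton h0]
  rw [hd] at h1
  have h2 : Module.finrank ℝ (⊤ : Submodule ℝ Plane) = 2 := by
    rw [finrank_top]
    exact finrank_euclideanSpace_fin
  omega

open MeasureTheory in
lemma exists_generic (z₀ : Plane) {ε : ℝ} (hε : 0 < ε) (F : Finset Plane)
    (G : Finset (Plane × Plane)) :
    ∃ z : Plane, ‖z - z₀‖ < ε ∧ (∀ w ∈ F, z ≠ w) ∧
      ∀ pq ∈ G, z ∉ line pq.1 pq.2 := by
  classical
  set Bad : Set Plane := (↑F : Set Plane) ∪ ⋃ pq ∈ (↑G : Set (Plane × Plane)), line pq.1 pq.2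
    with hBadDef
  have hBad : volume Bad = 0 := by
    rw [hBadDef, measure_union_null_iff]
    constructor
    · exact (F.finite_toSet).measure_zero _
    · rw [measure_biUnion_null_iff G.countable_toSet]
      intro pq _
      simpa [line] using Measure.addHaar_affineSubspace volume _ (line_ne_top pq.1 pq.2)
  have hball : (Metric.ball z₀ ε \ Bad).Nonempty := by
    apply nonempty_of_measure_ne_zero (μ := volume)
    rw [measure_diff_null hBad]
    exact (Metric.measure_ball_pos volume z₀ hε).ne'
  obtain ⟨z, hz1, hz2⟩ := hball
  refine ⟨z, ?_, ?_, ?_⟩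
  · rw [← dist_eq_norm]; exact Metric.mem_ball.mp hz1
  · intro w hw hzw
    exact hz2 (Or.inl (by rw [hzw]; exact Finset.mem_coe.mpr hw))
  · intro pq hpq hmem
    exact hz2 (Or.inr (Set.mem_biUnion (Finset.mem_coe.mpr hpq) hmem))

lemma exists_gp (T : ℕ → Plane) {ε : ℝ} (hε : 0 < ε) (M : ℕ) :
    ∃ v : ℕ → Plane, ∀ m ≤ M, ‖v m - T m‖ < ε ∧ (∀ i < m, v m ≠ v i) ∧
      (∀ i < m, ∀ j < m, v i ≠ v j → v m ∉ line (v i) (v j)) := by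
  classical
  induction M with
  | zero =>
    obtain ⟨z, hz, -, -⟩ := exists_generic (T 0) hε ∅ ∅
    refine ⟨fun _ => z, ?_⟩
    intro m hm
    interval_cases m
    exact ⟨hz, fun i hi => absurd hi (Nat.not_lt_zero i),
      fun i hi => absurd hi (Nat.not_lt_zero i)⟩
  | succ M ih =>
    obtain ⟨v, hv⟩ := ih
    obtain ⟨z, hz1, hz2, hz3⟩ := exists_generic (T (M + 1)) hε
      ((Finset.range (M + 1)).image v)
      (((Finset.range (M + 1)) ×ˢ (Finset.range (M + 1))).image (fun ij => (v ij.1, v ij.2)))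
    refine ⟨Function.update v (M + 1) z, ?_⟩
    intro m hm
    rcases Nat.lt_or_ge m (M + 1) with hm' | hm'
    · have hupd : ∀ i ≤ M, Function.update v (M + 1) z i = v i := fun i hi =>
        Function.update_of_ne (by omega) _ _
      have h := hv m (by omega)
      refine ⟨by rw [hupd m (by omega)]; exact h.1, ?_, ?_⟩
      · intro i hi
        rw [hupd m (by omega), hupd i (by omega)]
        exact h.2.1 i hi
      · intro i hi j hj hij
        rw [hupd i (by omega), hupd j (by omega)] at hij
        rw [hupd m (by omega), hupd i (by omega), hupd j (by omega)]
        exact h.2.2 i hi j hj hij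
    · have hmeq : m = M + 1 := by omega
      subst hmeq
      have hupdm : Function.update v (M + 1) z (M + 1) = z := Function.update_self _ _ _
      refine ⟨by rw [hupdm]; exact hz1, ?_, ?_⟩
      · intro i hi
        rw [hupdm, Function.update_of_ne (by omega) _ _]
        exact hz2 (v i) (Finset.mem_image.mpr ⟨i, Finset.mem_range.mpr (by omega), rfl⟩)
      · intro i hi j hj hij
        rw [hupdm, Function.update_of_ne (show i ≠ M + 1 by omega) _ _,
          Function.update_of_ne (show j ≠ M + 1 by omega) _ _]
        exact hz3 (v i, v j) (Finset.mem_image.mpr ⟨(i, j), Finset.mem_product.mpr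
          ⟨Finset.mem_range.mpr (by omega), Finset.mem_range.mpr (by omega)⟩, rfl⟩)

lemma gp_distinct {v : ℕ → Plane} {M : ℕ}
    (h : ∀ m ≤ M, ∀ i < m, v m ≠ v i) :
    ∀ i j, i ≤ M → j ≤ M → i ≠ j → v i ≠ v j := by
  intro i j hi hj hij
  rcases Nat.lt_or_ge i j with h' | h'
  · exact (h j hj i h').symm
  · exact h i hi j (by omega)

lemma gp_noncollinear {v : ℕ → Plane} {M : ℕ}
    (hd : ∀ i j, i ≤ M → j ≤ M → i ≠ j → v i ≠ v j)
    (h : ∀ m ≤ M, ∀ i < m, ∀ j < m, v i ≠ v j → v m ∉ line (v i) (v j)) :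
    ∀ a b c, a ≤ M → b ≤ M → c ≤ M → a ≠ b → a ≠ c → b ≠ c → v a ∉ line (v b) (v c) := by
  intro a b c ha hb hc hab hac hbc hmem
  have hvbc : v b ≠ v c := hd b c hb hc hbc
  have htri : (b < a ∧ c < a) ∨ (a < b ∧ c < b) ∨ (a < c ∧ b < c) := by omega
  rcases htri with ⟨h1, h2⟩ | ⟨h1, h2⟩ | ⟨h1, h2⟩
  · exact h a ha b h1 c h2 hvbc hmem
  · have hvac : v a ≠ v c := hd a c ha hc hac
    have hle : line (v a) (v c) = line (v b) (v c) :=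
      line_eq_of hvbc hvac hmem (right_mem_line _ _)
    exact h b hb a h1 c h2 hvac (by rw [hle]; exact left_mem_line _ _)
  · have hvba : v b ≠ v a := (hd a b ha hb hab).symm
    have hle : line (v b) (v a) = line (v b) (v c) :=
      line_eq_of hvbc hvba (left_mem_line _ _) hmem
    exact h c hc b h2 a h1 hvba (by rw [hle]; exact right_mem_line _ _)

lemma eq_smul_of_det_zero {u v : Plane} (hu : u ≠ 0)
    (h : u 0 * v 1 - u 1 * v 0 = 0) : ∃ μ : ℝ, v = μ • u := by
  have hcoord : u 0 ≠ 0 ∨ u 1 ≠ 0 := by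
    by_contra hc
    push_neg at hc
    apply hu
    ext i
    fin_cases i
    · simpa using hc.1
    · simpa using hc.2
  rcases hcoord with h0 | h0
  · refine ⟨v 0 / u 0, ?_⟩
    ext i
    fin_cases i
    · show v 0 = v 0 / u 0 * u 0
      field_simp
    · show v 1 = v 0 / u 0 * u 1
      field_simp
      linear_combination h
  · refine ⟨v 1 / u 1, ?_⟩
    ext i
    fin_cases i
    · show v 0 = v 1 / u 1 * u 0
      field_simp
      linear_combination -h
    · show v 1 = v 1 / u 1 * u 1
      field_simp
namespace Track

lemma path_dist (p : Track) {i : ℕ} (hik : i < p.k) {s u : ℝ} (hs1 : p.s i ≤ s)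
    (hs2 : s < p.s (i + 1)) (hu1 : p.s i ≤ u) (hu2 : u < p.s (i + 1)) :
    p.path u - p.path s = ((u - s) / (p.s (i + 1) - p.s i)) • (p.x (i + 1) - p.x i) := by
  rw [p.path_piece hik hu1 hu2, p.path_piece hik hs1 hs2, add_sub_add_left_eq_sub, ← sub_smul,
    div_sub_div_same]
  congr 2
  ring

lemma path_mem_line (q : Track) {t : ℝ} {j : ℕ} (hjk : j < q.k) (h1 : q.s j ≤ t)
    (h2 : t < q.s (j + 1)) : q.path t ∈ line (q.x j) (q.x (j + 1)) := by
  rw [q.path_piece hjk h1 h2]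
  have hm := AffineMap.lineMap_mem_affineSpan_pair (k := ℝ)
    ((t - q.s j) / (q.s (j + 1) - q.s j)) (q.x j) (q.x (j + 1))
  rw [AffineMap.lineMap_apply] at hm
  simpa [line, vsub_eq_sub, vadd_eq_add, add_comm] using hm

end Track

lemma entry_exit (p : Track) {i : ℕ} (hik : i < p.k) {s δ : ℝ}
    (hs1 : p.s i < s) (hs2 : s < p.s (i + 1)) (hδ : 0 < δ)
    (hlo : δ * (p.s (i + 1) - p.s i) < (s - p.s i) * ‖p.x (i + 1) - p.x i‖)
    (hhi : δ * (p.s (i + 1) - p.s i) < (p.s (i + 1) - s) * ‖p.x (i + 1) - p.x i‖) :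
    p.path (entryParam p s δ (p.path s)) =
      p.path s - (δ / ‖p.x (i + 1) - p.x i‖) • (p.x (i + 1) - p.x i) ∧
    p.path (exitParam p s δ (p.path s)) =
      p.path s + (δ / ‖p.x (i + 1) - p.x i‖) • (p.x (i + 1) - p.x i) := by
  set Δs : ℝ := p.s (i + 1) - p.s i with hΔsdef
  set Δx : Plane := p.x (i + 1) - p.x i with hΔxdef
  have hΔs : 0 < Δs := sub_pos.mpr (p.mono i hik)
  have hΔx : Δx ≠ 0 := sub_ne_zero.mpr (p.ne i hik).symm
  have hnx : 0 < ‖Δx‖ := norm_pos_iff.mpr hΔx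
  set r : ℝ := δ * Δs / ‖Δx‖ with hrdef
  have hr : 0 < r := by positivity
  have hsi : p.s i < s - r := by
    have : r < s - p.s i := (div_lt_iff₀ hnx).mpr hlo
    linarith
  have hsi1 : s + r < p.s (i + 1) := by
    have : r < p.s (i + 1) - s := (div_lt_iff₀ hnx).mpr hhi
    linarith
  have hrδ : r / Δs * ‖Δx‖ = δ := by
    rw [hrdef]; field_simp
  have hnorm : ∀ u, p.s i ≤ u → u < p.s (i + 1) →
      ‖p.path u - p.path s‖ = |u - s| / Δs * ‖Δx‖ := by
    intro u h1 h2
    rw [p.path_dist hik (le_of_lt hs1) hs2 h1 h2, norm_smul, Real.norm_eq_abs, abs_div,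
      abs_of_pos hΔs]
  have hE : {s' | s' < s ∧ p.path '' Set.Icc s' s ⊆ Metric.ball (p.path s) δ} =
      Set.Ioo (s - r) s := by
    ext s'
    simp only [Set.mem_setOf_eq, Set.mem_Ioo]
    constructor
    · rintro ⟨h1, h2⟩
      refine ⟨?_, h1⟩
      by_contra hcon
      push_neg at hcon
      have hu : p.path (s - r) ∈ Metric.ball (p.path s) δ :=
        h2 (Set.mem_image_of_mem _ ⟨hcon, by linarith⟩)
      rw [Metric.mem_ball, dist_eq_norm, hnorm (s - r) (by linarith) (by linarith)] at hu
      have habs : |s - r - s| = r := by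
        rw [show s - r - s = -r by ring, abs_neg, abs_of_pos hr]
      rw [habs, hrδ] at hu
      linarith
    · rintro ⟨h1, h2⟩
      refine ⟨h2, ?_⟩
      rintro z ⟨u, ⟨hu1, hu2⟩, rfl⟩
      rw [Metric.mem_ball, dist_eq_norm, hnorm u (by linarith) (by linarith)]
      have habs : |u - s| ≤ s - s' := by
        rw [abs_sub_comm, abs_of_nonneg (by linarith)]
        linarith
      rw [← hrδ]
      have hlt : |u - s| < r := lt_of_le_of_lt habs (by linarith)
      gcongr
  have hX : {s' | s < s' ∧ p.path '' Set.Icc s s' ⊆ Metric.ball (p.path s) δ} =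
      Set.Ioo s (s + r) := by
    ext s'
    simp only [Set.mem_setOf_eq, Set.mem_Ioo]
    constructor
    · rintro ⟨h1, h2⟩
      refine ⟨h1, ?_⟩
      by_contra hcon
      push_neg at hcon
      have hu : p.path (s + r) ∈ Metric.ball (p.path s) δ :=
        h2 (Set.mem_image_of_mem _ ⟨by linarith, hcon⟩)
      rw [Metric.mem_ball, dist_eq_norm, hnorm (s + r) (by linarith) (by linarith)] at hu
      have habs : |s + r - s| = r := by
        rw [show s + r - s = r by ring, abs_of_pos hr]
      rw [habs, hrδ] at hu
      linarith
    · rintro ⟨h1, h2⟩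
      refine ⟨h1, ?_⟩
      rintro z ⟨u, ⟨hu1, hu2⟩, rfl⟩
      rw [Metric.mem_ball, dist_eq_norm, hnorm u (by linarith) (by linarith)]
      have habs : |u - s| ≤ s' - s := by
        rw [abs_of_nonneg (by linarith)]
        linarith
      rw [← hrδ]
      have hlt : |u - s| < r := lt_of_le_of_lt habs (by linarith)
      gcongr
  have hentry : entryParam p s δ (p.path s) = s - r := by
    unfold entryParam
    rw [hE]
    exact csInf_Ioo (by linarith)
  have hexit : exitParam p s δ (p.path s) = s + r := by
    unfold exitParam
    rw [hX]
    exact csSup_Ioo (by linarith)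
  constructor
  · rw [hentry]
    have h := p.path_dist hik (le_of_lt hs1) hs2 (le_of_lt hsi) (by linarith)
    have hsc : (s - r - s) / Δs = -(δ / ‖Δx‖) := by
      rw [show s - r - s = -r by ring, hrdef]
      field_simp
    rw [hsc, neg_smul] at h
    have h2 := sub_eq_iff_eq_add.mp h
    rw [h2]
    abel
  · rw [hexit]
    have h := p.path_dist hik (le_of_lt hs1) hs2 (by linarith) hsi1
    have hsc : (s + r - s) / Δs = δ / ‖Δx‖ := by
      rw [show s + r - s = r by ring, hrdef]
      field_simp
    rw [hsc] at h
    have h2 := sub_eq_iff_eq_add.mp h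
    rw [h2]
    abel
lemma inter_not_vertex {p q : Track} (hsep : WSep p q) {s t : ℝ} (h : IsInter p q s t) :
    (∀ i ≤ p.k, p.path s ≠ p.x i) ∧ (∀ j ≤ q.k, p.path s ≠ q.x j) := by
  obtain ⟨hs0, hsk, ht0, htk, hpq⟩ := h
  obtain ⟨hjk, hj1, hj2⟩ := q.seg_spec (le_of_lt ht0) htk
  obtain ⟨hik, hi1, hi2⟩ := p.seg_spec (le_of_lt hs0) hsk
  have hxq : p.path s ∈ line (q.x (q.seg t)) (q.x (q.seg t + 1)) := by
    rw [hpq]; exact q.path_mem_line hjk hj1 hj2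
  have hxp : p.path s ∈ line (p.x (p.seg s)) (p.x (p.seg s + 1)) :=
    p.path_mem_line hik hi1 hi2
  constructor
  · intro i hi heq
    have hmem : p.x i ∈ Track.V p ∩ Track.L q :=
      ⟨⟨i, hi, rfl⟩, ⟨q.seg t, hjk, by rw [← heq]; exact hxq⟩⟩
    rw [hsep.1] at hmem; exact hmem
  · intro j hj heq
    have hmem : q.x j ∈ Track.V q ∩ Track.L p :=
      ⟨⟨j, hj, rfl⟩, ⟨p.seg s, hik, by rw [← heq]; exact hxp⟩⟩
    rw [hsep.2] at hmem; exact hmem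

lemma Track.path_sub_vertex_left (p : Track) {i : ℕ} (hik : i < p.k) {s : ℝ}
    (h1 : p.s i ≤ s) (h2 : s < p.s (i + 1)) :
    p.path s - p.x i = ((s - p.s i) / (p.s (i + 1) - p.s i)) • (p.x (i + 1) - p.x i) := by
  have h0 := p.path_dist hik le_rfl (p.mono i hik) h1 h2
  rwa [p.path_vertex hik] at h0

lemma Track.path_sub_vertex_right (p : Track) {i : ℕ} (hik : i < p.k) {s : ℝ}
    (h1 : p.s i ≤ s) (h2 : s < p.s (i + 1)) :
    p.path s - p.x (i + 1) = ((s - p.s (i + 1)) / (p.s (i + 1) - p.s i)) • (p.x (i + 1) - p.x i) := by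
  have hΔ : p.s (i + 1) - p.s i ≠ 0 := ne_of_gt (sub_pos.mpr (p.mono i hik))
  rw [p.path_piece hik h1 h2]
  rw [show p.x i + ((s - p.s i) / (p.s (i + 1) - p.s i)) • (p.x (i + 1) - p.x i) - p.x (i + 1)
      = ((s - p.s i) / (p.s (i + 1) - p.s i) - 1) • (p.x (i + 1) - p.x i) by
    rw [sub_smul, one_smul]; abel]
  congr 1
  field_simp
  ring

lemma local_entry_exit (p : Track) {s δ : ℝ} (hs0 : p.s 0 < s) (hsk : s < p.s p.k)
    (hvx : p.path s ≠ p.x (p.seg s)) (hδ : 0 < δ)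
    (hlo : δ < ‖p.path s - p.x (p.seg s)‖) (hhi : δ < ‖p.path s - p.x (p.seg s + 1)‖) :
    p.path (entryParam p s δ (p.path s)) = p.path s -
      (δ / ‖p.x (p.seg s + 1) - p.x (p.seg s)‖) • (p.x (p.seg s + 1) - p.x (p.seg s)) ∧
    p.path (exitParam p s δ (p.path s)) = p.path s +
      (δ / ‖p.x (p.seg s + 1) - p.x (p.seg s)‖) • (p.x (p.seg s + 1) - p.x (p.seg s)) := by
  obtain ⟨hik, hi1, hi2⟩ := p.seg_spec (le_of_lt hs0) hsk
  have hΔs : 0 < p.s (p.seg s + 1) - p.s (p.seg s) := sub_pos.mpr (p.mono _ hik)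
  have hnx : 0 < ‖p.x (p.seg s + 1) - p.x (p.seg s)‖ :=
    norm_pos_iff.mpr (sub_ne_zero.mpr (p.ne _ hik).symm)
  have hi1' : p.s (p.seg s) < s := by
    rcases lt_or_eq_of_le hi1 with h | h
    · exact h
    · exfalso; exact hvx (by conv_lhs => rw [← h, p.path_vertex hik])
  have hnxi : ‖p.path s - p.x (p.seg s)‖ =
      (s - p.s (p.seg s)) / (p.s (p.seg s + 1) - p.s (p.seg s)) * ‖p.x (p.seg s + 1) - p.x (p.seg s)‖ := by
    rw [p.path_sub_vertex_left hik hi1 hi2, norm_smul, Real.norm_eq_abs,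
      abs_of_pos (div_pos (by linarith) hΔs)]
  have hnxi1 : ‖p.path s - p.x (p.seg s + 1)‖ =
      (p.s (p.seg s + 1) - s) / (p.s (p.seg s + 1) - p.s (p.seg s)) * ‖p.x (p.seg s + 1) - p.x (p.seg s)‖ := by
    rw [p.path_sub_vertex_right hik hi1 hi2, norm_smul, Real.norm_eq_abs, abs_div,
      abs_of_pos hΔs, abs_sub_comm, abs_of_pos (by linarith)]
  have hlo' : δ * (p.s (p.seg s + 1) - p.s (p.seg s)) <
      (s - p.s (p.seg s)) * ‖p.x (p.seg s + 1) - p.x (p.seg s)‖ := by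
    rw [hnxi, div_mul_eq_mul_div] at hlo
    exact (lt_div_iff₀ hΔs).mp hlo
  have hhi' : δ * (p.s (p.seg s + 1) - p.s (p.seg s)) <
      (p.s (p.seg s + 1) - s) * ‖p.x (p.seg s + 1) - p.x (p.seg s)‖ := by
    rw [hnxi1, div_mul_eq_mul_div] at hhi
    exact (lt_div_iff₀ hΔs).mp hhi
  exact entry_exit p hik hi1' hi2 hδ hlo' hhi'
lemma alternates_of_indep {x : Plane} {δ : ℝ} (hδ : 0 < δ) {Dx Dy : Plane}
    (hDx : Dx ≠ 0) (hDy : Dy ≠ 0) (hpar : ∀ μ : ℝ, Dy ≠ μ • Dx) :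
    Alternates x δ (x - (δ / ‖Dx‖) • Dx) (x + (δ / ‖Dx‖) • Dx)
      (x - (δ / ‖Dy‖) • Dy) (x + (δ / ‖Dy‖) • Dy) := by
  have hnx : 0 < ‖Dx‖ := norm_pos_iff.mpr hDx
  have hny : 0 < ‖Dy‖ := norm_pos_iff.mpr hDy
  set cp := δ / ‖Dx‖ with hcp
  set cq := δ / ‖Dy‖ with hcq
  have hcppos : 0 < cp := by positivity
  have hcqpos : 0 < cq := by positivity
  have hkey : ∀ e : ℝ, cq • Dy ≠ e • Dx := by
    intro e he
    exact hpar (cq⁻¹ * e) (by rw [mul_smul, ← he, inv_smul_smul₀ (ne_of_gt hcqpos)])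
  have hD : Dx 0 * Dy 1 - Dx 1 * Dy 0 ≠ 0 := by
    intro h
    obtain ⟨μ, hμ⟩ := eq_smul_of_det_zero hDx h
    exact hpar μ hμ
  have hc_mem : (x - cq • Dy) ∈ Metric.sphere x δ := by
    rw [mem_sphere_iff_norm, show x - cq • Dy - x = -(cq • Dy) by abel, norm_neg, norm_smul,
      Real.norm_eq_abs, abs_of_pos hcqpos, hcq]
    exact div_mul_cancel₀ δ (ne_of_gt hny)
  have hd_mem : (x + cq • Dy) ∈ Metric.sphere x δ := by
    rw [mem_sphere_iff_norm, add_sub_cancel_left, norm_smul, Real.norm_eq_abs,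
      abs_of_pos hcqpos, hcq]
    exact div_mul_cancel₀ δ (ne_of_gt hny)
  have hc_ne_a : x - cq • Dy ≠ x - cp • Dx := by
    intro h
    exact hkey cp (sub_right_injective h)
  have hc_ne_b : x - cq • Dy ≠ x + cp • Dx := by
    intro h
    have h1 : -(cq • Dy) = cp • Dx := add_left_cancel (by rw [← sub_eq_add_neg]; exact h)
    have h2 : cq • Dy = (-cp) • Dx := by rw [neg_smul]; exact neg_eq_iff_eq_neg.mp h1
    exact hkey (-cp) h2
  have hd_ne_a : x + cq • Dy ≠ x - cp • Dx := by
    intro h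
    have h1 : cq • Dy = -(cp • Dx) :=
      add_left_cancel (show x + cq • Dy = x + -(cp • Dx) by rw [← sub_eq_add_neg]; exact h)
    exact hkey (-cp) (by rw [h1, neg_smul])
  have hd_ne_b : x + cq • Dy ≠ x + cp • Dx := fun h => hkey cp (add_left_cancel h)
  have hcnot : (x - cq • Dy) ∉ ({x - cp • Dx, x + cp • Dx} : Set Plane) := by
    simp only [Set.mem_insert_iff, Set.mem_singleton_iff]
    push_neg
    exact ⟨hc_ne_a, hc_ne_b⟩
  have hdnot : (x + cq • Dy) ∉ ({x - cp • Dx, x + cp • Dx} : Set Plane) := by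
    simp only [Set.mem_insert_iff, Set.mem_singleton_iff]
    push_neg
    exact ⟨hd_ne_a, hd_ne_b⟩
  set φ : Plane → ℝ := fun z => Dx 0 * (z 1 - x 1) - Dx 1 * (z 0 - x 0) with hφ
  have h0cont : Continuous fun z : Plane => z 0 := (EuclideanSpace.proj (0 : Fin 2)).continuous
  have h1cont : Continuous fun z : Plane => z 1 := (EuclideanSpace.proj (1 : Fin 2)).continuous
  have hφcont : Continuous φ := by
    rw [hφ]
    exact (continuous_const.mul (h1cont.sub continuous_const)).sub
      (continuous_const.mul (h0cont.sub continuous_const))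
  have hφc : φ (x - cq • Dy) = -(cq * (Dx 0 * Dy 1 - Dx 1 * Dy 0)) := by
    rw [hφ]
    simp only [PiLp.sub_apply, PiLp.smul_apply, smul_eq_mul]
    ring
  have hφd : φ (x + cq • Dy) = cq * (Dx 0 * Dy 1 - Dx 1 * Dy 0) := by
    rw [hφ]
    simp only [PiLp.add_apply, PiLp.smul_apply, smul_eq_mul]
    ring
  set S : Set Plane := Metric.sphere x δ \ {x - cp • Dx, x + cp • Dx} with hS
  have hnozero : ∀ z ∈ S, φ z ≠ 0 := by
    intro z hz hφz
    have hdet : Dx 0 * (z - x) 1 - Dx 1 * (z - x) 0 = 0 := by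
      simpa [PiLp.sub_apply, hφ] using hφz
    obtain ⟨μ, hμ⟩ := eq_smul_of_det_zero hDx hdet
    have hz1 : ‖z - x‖ = δ := mem_sphere_iff_norm.mp hz.1
    rw [hμ, norm_smul, Real.norm_eq_abs] at hz1
    have habs : |μ| = cp := by
      rw [hcp]
      exact (eq_div_iff (ne_of_gt hnx)).mpr hz1
    rcases (abs_eq (le_of_lt hcppos)).mp habs with h | h
    · refine hz.2 (Set.mem_insert_iff.mpr (Or.inr ?_))
      have hzeq := sub_eq_iff_eq_add.mp hμ
      rw [h] at hzeq
      simp only [Set.mem_singleton_iff]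
      rw [hzeq, add_comm]
    · refine hz.2 (Set.mem_insert_iff.mpr (Or.inl ?_))
      have hzeq := sub_eq_iff_eq_add.mp hμ
      rw [h, neg_smul] at hzeq
      rw [hzeq]
      abel
  refine ⟨⟨hc_mem, hcnot⟩, ⟨hd_mem, hdnot⟩, ?_⟩
  intro hCeq
  have hcS : (x - cq • Dy) ∈ S := ⟨hc_mem, hcnot⟩
  have hdS : (x + cq • Dy) ∈ S := ⟨hd_mem, hdnot⟩
  have hpre : IsPreconnected (connectedComponentIn S (x - cq • Dy)) :=
    isPreconnected_connectedComponentIn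
  have hcm : (x - cq • Dy) ∈ connectedComponentIn S (x - cq • Dy) :=
    mem_connectedComponentIn hcS
  have hdm : (x + cq • Dy) ∈ connectedComponentIn S (x - cq • Dy) := by
    rw [hCeq]; exact mem_connectedComponentIn hdS
  have hsub := connectedComponentIn_subset S (x - cq • Dy)
  rcases lt_or_gt_of_ne hD with hD' | hD'
  · have hIVT := hpre.intermediate_value hdm hcm (hφcont.continuousOn)
    have h0 : (0 : ℝ) ∈ Set.Icc (φ (x + cq • Dy)) (φ (x - cq • Dy)) := by
      rw [hφc, hφd]
      constructor
      · nlinarith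
      · nlinarith
    obtain ⟨z, hzC, hφz⟩ := hIVT h0
    exact hnozero z (hsub hzC) hφz
  · have hIVT := hpre.intermediate_value hcm hdm (hφcont.continuousOn)
    have h0 : (0 : ℝ) ∈ Set.Icc (φ (x - cq • Dy)) (φ (x + cq • Dy)) := by
      rw [hφc, hφd]
      constructor
      · nlinarith
      · nlinarith
    obtain ⟨z, hzC, hφz⟩ := hIVT h0
    exact hnozero z (hsub hzC) hφz
lemma isCrossing_of_isInter {p q : Track} (hsep : WSep p q) {s t : ℝ}
    (h : IsInter p q s t) : IsCrossing p q s t := by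
  obtain ⟨hs0, hsk, ht0, htk, hpq⟩ := h
  obtain ⟨hvp, hvq⟩ := inter_not_vertex hsep ⟨hs0, hsk, ht0, htk, hpq⟩
  obtain ⟨hik, hi1, hi2⟩ := p.seg_spec (le_of_lt hs0) hsk
  obtain ⟨hjk, hj1, hj2⟩ := q.seg_spec (le_of_lt ht0) htk
  classical
  set Vd : Finset ℝ := ((Finset.range (p.k + 1)).image fun i' => ‖p.path s - p.x i'‖) ∪
    ((Finset.range (q.k + 1)).image fun j' => ‖p.path s - q.x j'‖) with hVd
  have hVdne : Vd.Nonempty := ⟨‖p.path s - p.x 0‖, by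
    rw [hVd]
    exact Finset.mem_union_left _ (Finset.mem_image.mpr ⟨0, Finset.mem_range.mpr (by omega), rfl⟩)⟩
  set δ := Vd.min' hVdne / 2 with hδdef
  have hδ₀pos : 0 < Vd.min' hVdne := by
    have hmem := Vd.min'_mem hVdne
    rcases Finset.mem_union.mp hmem with hmem' | hmem' <;>
      obtain ⟨i', hi', heq⟩ := Finset.mem_image.mp hmem'
    · rw [← heq]
      exact norm_pos_iff.mpr (sub_ne_zero.mpr (hvp i' (by
        have := Finset.mem_range.mp hi'; omega)))
    · rw [← heq]
      exact norm_pos_iff.mpr (sub_ne_zero.mpr (hvq i' (by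
        have := Finset.mem_range.mp hi'; omega)))
  have hδpos : 0 < δ := by rw [hδdef]; linarith
  have hδp : ∀ i' ≤ p.k, δ < ‖p.path s - p.x i'‖ := by
    intro i' hi'
    have hle := Vd.min'_le ‖p.path s - p.x i'‖ (by
      rw [hVd]
      exact Finset.mem_union_left _
        (Finset.mem_image.mpr ⟨i', Finset.mem_range.mpr (by omega), rfl⟩))
    rw [hδdef]; linarith
  have hδq : ∀ j' ≤ q.k, δ < ‖p.path s - q.x j'‖ := by
    intro j' hj'
    have hle := Vd.min'_le ‖p.path s - q.x j'‖ (by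
      rw [hVd]
      exact Finset.mem_union_right _
        (Finset.mem_image.mpr ⟨j', Finset.mem_range.mpr (by omega), rfl⟩))
    rw [hδdef]; linarith
  obtain ⟨hpe, hpx⟩ := local_entry_exit p hs0 hsk (hvp _ (le_of_lt hik)) hδpos
    (hδp _ (le_of_lt hik)) (hδp _ hik)
  have hvq' : q.path t ≠ q.x (q.seg t) := by rw [← hpq]; exact hvq _ (le_of_lt hjk)
  have hδqlo : δ < ‖q.path t - q.x (q.seg t)‖ := by rw [← hpq]; exact hδq _ (le_of_lt hjk)
  have hδqhi : δ < ‖q.path t - q.x (q.seg t + 1)‖ := by rw [← hpq]; exact hδq _ hjk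
  obtain ⟨hqe, hqx⟩ := local_entry_exit q ht0 htk hvq' hδpos hδqlo hδqhi
  have hΔxne : (p.x (p.seg s + 1) - p.x (p.seg s)) ≠ 0 := sub_ne_zero.mpr (p.ne _ hik).symm
  have hΔyne : (q.x (q.seg t + 1) - q.x (q.seg t)) ≠ 0 := sub_ne_zero.mpr (q.ne _ hjk).symm
  have hΔs : (0:ℝ) < p.s (p.seg s + 1) - p.s (p.seg s) := sub_pos.mpr (p.mono _ hik)
  have hpar : ∀ μ : ℝ,
      (q.x (q.seg t + 1) - q.x (q.seg t)) ≠ μ • (p.x (p.seg s + 1) - p.x (p.seg s)) := by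
    intro μ hμ
    have hμ0 : μ ≠ 0 := by
      rintro rfl
      rw [zero_smul] at hμ
      exact hΔyne hμ
    have hxline : p.path s ∈ line (q.x (q.seg t)) (q.x (q.seg t + 1)) := by
      rw [hpq]; exact q.path_mem_line hjk hj1 hj2
    have hxi := p.path_sub_vertex_left hik hi1 hi2
    have hdirmem : (p.x (p.seg s) - p.path s) ∈
        (affineSpan ℝ ({q.x (q.seg t), q.x (q.seg t + 1)} : Set Plane)).direction := by
      rw [direction_line]
      refine Submodule.mem_span_singleton.mpr
        ⟨(s - p.s (p.seg s)) / (p.s (p.seg s + 1) - p.s (p.seg s)) * μ⁻¹, ?_⟩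
      have hyx : q.x (q.seg t) - q.x (q.seg t + 1)
          = (-μ) • (p.x (p.seg s + 1) - p.x (p.seg s)) := by
        rw [neg_smul, ← hμ]; abel
      rw [hyx, smul_smul]
      rw [show (s - p.s (p.seg s)) / (p.s (p.seg s + 1) - p.s (p.seg s)) * μ⁻¹ * -μ
          = -((s - p.s (p.seg s)) / (p.s (p.seg s + 1) - p.s (p.seg s))) by field_simp]
      rw [neg_smul, ← hxi]
      abel
    have hvmem : p.x (p.seg s) ∈
        affineSpan ℝ ({q.x (q.seg t), q.x (q.seg t + 1)} : Set Plane) := by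
      have h2 := AffineSubspace.vadd_mem_of_mem_direction hdirmem hxline
      simpa [vadd_eq_add, sub_add_cancel] using h2
    have hbad : p.x (p.seg s) ∈ Track.V p ∩ Track.L q :=
      ⟨⟨p.seg s, le_of_lt hik, rfl⟩, ⟨q.seg t, hjk, hvmem⟩⟩
    rw [hsep.1] at hbad
    exact hbad
  refine ⟨⟨hs0, hsk, ht0, htk, hpq⟩, δ, ⟨hδpos, ?_⟩, ?_⟩
  · rintro v (⟨i', hi', rfl⟩ | ⟨j', hj', rfl⟩) hball
    · exfalso
      rw [Metric.mem_ball, dist_eq_norm, norm_sub_rev] at hball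
      have := hδp i' hi'
      linarith
    · exfalso
      rw [Metric.mem_ball, dist_eq_norm, norm_sub_rev] at hball
      have := hδq j' hj'
      linarith
  · unfold CrossAt
    rw [show entryParam q t δ (p.path s) = entryParam q t δ (q.path t) by rw [hpq],
        show exitParam q t δ (p.path s) = exitParam q t δ (q.path t) by rw [hpq],
        hpe, hpx, hqe, hqx, ← hpq]
    exact alternates_of_indep hδpos hΔxne hΔyne hpar
lemma not_parallel {p q : Track} (hsep : WSep p q) {s t : ℝ} (h : IsInter p q s t) :
    ∀ μ : ℝ, (q.x (q.seg t + 1) - q.x (q.seg t)) ≠ μ • (p.x (p.seg s + 1) - p.x (p.seg s)) := by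
  obtain ⟨hs0, hsk, ht0, htk, hpq⟩ := h
  obtain ⟨hik, hi1, hi2⟩ := p.seg_spec (le_of_lt hs0) hsk
  obtain ⟨hjk, hj1, hj2⟩ := q.seg_spec (le_of_lt ht0) htk
  have hΔyne : (q.x (q.seg t + 1) - q.x (q.seg t)) ≠ 0 := sub_ne_zero.mpr (q.ne _ hjk).symm
  intro μ hμ
  have hμ0 : μ ≠ 0 := by
    rintro rfl
    rw [zero_smul] at hμ
    exact hΔyne hμ
  have hxline : p.path s ∈ line (q.x (q.seg t)) (q.x (q.seg t + 1)) := by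
    rw [hpq]; exact q.path_mem_line hjk hj1 hj2
  have hxi := p.path_sub_vertex_left hik hi1 hi2
  have hdirmem : (p.x (p.seg s) - p.path s) ∈
      (affineSpan ℝ ({q.x (q.seg t), q.x (q.seg t + 1)} : Set Plane)).direction := by
    rw [direction_line]
    refine Submodule.mem_span_singleton.mpr
      ⟨(s - p.s (p.seg s)) / (p.s (p.seg s + 1) - p.s (p.seg s)) * μ⁻¹, ?_⟩
    have hyx : q.x (q.seg t) - q.x (q.seg t + 1)
        = (-μ) • (p.x (p.seg s + 1) - p.x (p.seg s)) := by
      rw [neg_smul, ← hμ]; abel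
    rw [hyx, smul_smul]
    rw [show (s - p.s (p.seg s)) / (p.s (p.seg s + 1) - p.s (p.seg s)) * μ⁻¹ * -μ
        = -((s - p.s (p.seg s)) / (p.s (p.seg s + 1) - p.s (p.seg s))) by
      rw [mul_assoc, mul_neg, inv_mul_cancel₀ hμ0, mul_neg_one]]
    rw [neg_smul, ← hxi]
    abel
  have hvmem : p.x (p.seg s) ∈
      affineSpan ℝ ({q.x (q.seg t), q.x (q.seg t + 1)} : Set Plane) := by
    have h2 := AffineSubspace.vadd_mem_of_mem_direction hdirmem hxline
    simpa [vadd_eq_add, sub_add_cancel] using h2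
  have hbad : p.x (p.seg s) ∈ Track.V p ∩ Track.L q :=
    ⟨⟨p.seg s, le_of_lt hik, rfl⟩, ⟨q.seg t, hjk, hvmem⟩⟩
  rw [hsep.1] at hbad
  exact hbad

lemma inter_finite {p q : Track} (hsep : WSep p q) :
    {st : ℝ × ℝ | IsInter p q st.1 st.2}.Finite := by
  have hinj : Set.InjOn (fun st : ℝ × ℝ => (p.seg st.1, q.seg st.2))
      {st | IsInter p q st.1 st.2} := by
    rintro ⟨s, t⟩ hst ⟨s', t'⟩ hst' hEq
    have hI : IsInter p q s t := hst
    have hI' : IsInter p q s' t' := hst'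
    have hEq1 : p.seg s = p.seg s' := congrArg Prod.fst hEq
    have hEq2 : q.seg t = q.seg t' := congrArg Prod.snd hEq
    obtain ⟨hs0, hsk, ht0, htk, hpq⟩ := hI
    obtain ⟨hs0', hsk', ht0', htk', hpq'⟩ := hI'
    obtain ⟨hik, hi1, hi2⟩ := p.seg_spec (le_of_lt hs0) hsk
    obtain ⟨hjk, hj1, hj2⟩ := q.seg_spec (le_of_lt ht0) htk
    obtain ⟨hik', hi1', hi2'⟩ := p.seg_spec (le_of_lt hs0') hsk'
    obtain ⟨hjk', hj1', hj2'⟩ := q.seg_spec (le_of_lt ht0') htk'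
    have hΔs : (0:ℝ) < p.s (p.seg s + 1) - p.s (p.seg s) := sub_pos.mpr (p.mono _ hik)
    have hΔt : (0:ℝ) < q.s (q.seg t + 1) - q.s (q.seg t) := sub_pos.mpr (q.mono _ hjk)
    have hΔxne : (p.x (p.seg s + 1) - p.x (p.seg s)) ≠ 0 := sub_ne_zero.mpr (p.ne _ hik).symm
    have hΔyne : (q.x (q.seg t + 1) - q.x (q.seg t)) ≠ 0 := sub_ne_zero.mpr (q.ne _ hjk).symm
    have hxx : p.path s = p.path s' := by
      by_contra hne
      have hxp : p.path s ∈ line (p.x (p.seg s)) (p.x (p.seg s + 1)) :=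
        p.path_mem_line hik hi1 hi2
      have hxp' : p.path s' ∈ line (p.x (p.seg s)) (p.x (p.seg s + 1)) := by
        have h3 := p.path_mem_line hik' hi1' hi2'
        rwa [← hEq1] at h3
      have hxq : p.path s ∈ line (q.x (q.seg t)) (q.x (q.seg t + 1)) := by
        rw [hpq]; exact q.path_mem_line hjk hj1 hj2
      have hxq' : p.path s' ∈ line (q.x (q.seg t)) (q.x (q.seg t + 1)) := by
        rw [hpq']
        have h3 := q.path_mem_line hjk' hj1' hj2'
        rwa [← hEq2] at h3
      have hp_ne : p.x (p.seg s) ≠ p.x (p.seg s + 1) := p.ne _ hik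
      have hq_ne : q.x (q.seg t) ≠ q.x (q.seg t + 1) := q.ne _ hjk
      have hl1 : line (p.path s) (p.path s') = line (p.x (p.seg s)) (p.x (p.seg s + 1)) :=
        line_eq_of hp_ne hne hxp hxp'
      have hl2 : line (p.path s) (p.path s') = line (q.x (q.seg t)) (q.x (q.seg t + 1)) :=
        line_eq_of hq_ne hne hxq hxq'
      have e1 : (affineSpan ℝ ({p.x (p.seg s), p.x (p.seg s + 1)} : Set Plane))
          = affineSpan ℝ ({q.x (q.seg t), q.x (q.seg t + 1)} : Set Plane) := by
        have e0 : line (p.x (p.seg s)) (p.x (p.seg s + 1))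
            = line (q.x (q.seg t)) (q.x (q.seg t + 1)) := by rw [← hl1, hl2]
        unfold line at e0
        exact SetLike.coe_injective e0
      have hdir : (ℝ ∙ (p.x (p.seg s) - p.x (p.seg s + 1)) : Submodule ℝ Plane)
          = ℝ ∙ (q.x (q.seg t) - q.x (q.seg t + 1)) := by
        rw [← direction_line, ← direction_line, e1]
      have hmem : q.x (q.seg t + 1) - q.x (q.seg t)
          ∈ (ℝ ∙ (p.x (p.seg s) - p.x (p.seg s + 1)) : Submodule ℝ Plane) := by
        rw [hdir]
        refine Submodule.mem_span_singleton.mpr ⟨-1, ?_⟩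
        rw [neg_smul, one_smul]
        abel
      obtain ⟨μ, hμ⟩ := Submodule.mem_span_singleton.mp hmem
      refine not_parallel hsep hst (-μ) ?_
      rw [← hμ, neg_smul, ← smul_neg, neg_sub]
    have hss : s = s' := by
      have hd := p.path_dist hik hi1 hi2
        (show p.s (p.seg s) ≤ s' by rw [hEq1]; exact hi1')
        (show s' < p.s (p.seg s + 1) by rw [hEq1]; exact hi2')
      rw [← hxx, sub_self] at hd
      have hz := (smul_eq_zero.mp hd.symm).resolve_right hΔxne
      rcases div_eq_zero_iff.mp hz with h | h
      · linarith
      · linarith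
    have htt : t = t' := by
      have hqq : q.path t = q.path t' := by rw [← hpq, ← hpq', hxx]
      have hd := q.path_dist hjk hj1 hj2
        (show q.s (q.seg t) ≤ t' by rw [hEq2]; exact hj1')
        (show t' < q.s (q.seg t + 1) by rw [hEq2]; exact hj2')
      rw [← hqq, sub_self] at hd
      have hz := (smul_eq_zero.mp hd.symm).resolve_right hΔyne
      rcases div_eq_zero_iff.mp hz with h | h
      · linarith
      · linarith
    rw [Prod.mk.injEq]
    exact ⟨hss, htt⟩
  apply Set.Finite.of_finite_image _ hinj
  apply Set.Finite.subset (Set.finite_Icc ((0:ℕ), (0:ℕ)) ((p.k, q.k)))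
  rintro ⟨i, j⟩ ⟨⟨s, t⟩, hst, hEq⟩
  have hI : IsInter p q s t := hst
  obtain ⟨hs0, hsk, ht0, htk, hpq⟩ := hI
  obtain ⟨hik, -, -⟩ := p.seg_spec (le_of_lt hs0) hsk
  obtain ⟨hjk, -, -⟩ := q.seg_spec (le_of_lt ht0) htk
  have hEq1 : p.seg s = i := congrArg Prod.fst hEq
  have hEq2 : q.seg t = j := congrArg Prod.snd hEq
  constructor
  · exact ⟨Nat.zero_le _, Nat.zero_le _⟩
  · exact ⟨by omega, by omega⟩
lemma path_agree_left {p p₁ : Track} (hk : p₁.k ≤ p.k)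
    (hs₁ : ∀ i ≤ p₁.k, p.s i = p₁.s i) (hx₁ : ∀ i ≤ p₁.k, p.x i = p₁.x i)
    {s : ℝ} (h0 : p₁.s 0 ≤ s) (h1 : s < p₁.s p₁.k) : p.path s = p₁.path s := by
  obtain ⟨hik, hi1, hi2⟩ := p₁.seg_spec h0 h1
  have hpi : p.seg s = p₁.seg s := p.seg_eq (lt_of_lt_of_le hik hk)
    (by rw [hs₁ _ (le_of_lt hik)]; exact hi1) (by rw [hs₁ _ hik]; exact hi2)
  unfold Track.path
  rw [hpi, hs₁ _ (le_of_lt hik), hs₁ _ hik, hx₁ _ (le_of_lt hik), hx₁ _ hik]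

lemma path_agree_right {p p₂ : Track} {K : ℕ} (hk : p.k = K + p₂.k)
    (hs₂ : ∀ i ≤ p₂.k, p.s (K + i) = p₂.s i) (hx₂ : ∀ i ≤ p₂.k, p.x (K + i) = p₂.x i)
    {s : ℝ} (h0 : p₂.s 0 ≤ s) (h1 : s < p₂.s p₂.k) : p.path s = p₂.path s := by
  obtain ⟨hik, hi1, hi2⟩ := p₂.seg_spec h0 h1
  have hpi : p.seg s = K + p₂.seg s := p.seg_eq (by omega)
    (by rw [hs₂ _ (le_of_lt hik)]; exact hi1)
    (by rw [show K + p₂.seg s + 1 = K + (p₂.seg s + 1) by omega, hs₂ _ hik]; exact hi2)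
  unfold Track.path
  rw [hpi, show K + p₂.seg s + 1 = K + (p₂.seg s + 1) by omega,
    hs₂ _ (le_of_lt hik), hs₂ _ hik, hx₂ _ (le_of_lt hik), hx₂ _ hik]

lemma inter_split {p p₁ p₂ q : Track} (hsep : WSep p q)
    (hk : p.k = p₁.k + p₂.k) (hk₁ : 1 ≤ p₁.k) (hk₂ : 1 ≤ p₂.k)
    (hs₁ : ∀ i ≤ p₁.k, p.s i = p₁.s i) (hx₁ : ∀ i ≤ p₁.k, p.x i = p₁.x i)
    (hs₂ : ∀ i ≤ p₂.k, p.s (p₁.k + i) = p₂.s i) (hx₂ : ∀ i ≤ p₂.k, p.x (p₁.k + i) = p₂.x i) :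
    {st : ℝ × ℝ | IsInter p q st.1 st.2}
      = {st | IsInter p₁ q st.1 st.2} ∪ {st | IsInter p₂ q st.1 st.2} := by
  have hc1 : p.s p₁.k = p₁.s p₁.k := hs₁ p₁.k le_rfl
  have hc2 : p.s p₁.k = p₂.s 0 := by
    have h := hs₂ 0 (by omega); rwa [Nat.add_zero] at h
  have h0eq : p.s 0 = p₁.s 0 := hs₁ 0 (by omega)
  have hkeq : p.s p.k = p₂.s p₂.k := by rw [hk]; exact hs₂ p₂.k le_rfl
  ext ⟨s, t⟩
  simp only [Set.mem_setOf_eq, Set.mem_union]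
  constructor
  · intro hI
    obtain ⟨hs0, hsk, ht0, htk, hpq⟩ := hI
    rcases lt_trichotomy s (p.s p₁.k) with hlt | hEqc | hgt
    · left
      refine ⟨by rw [← h0eq]; exact hs0, by rw [← hc1]; exact hlt, ht0, htk, ?_⟩
      rw [← path_agree_left (by omega) hs₁ hx₁ (by rw [← h0eq]; linarith)
        (by rw [← hc1]; exact hlt)]
      exact hpq
    · exfalso
      have hvert : p.path s = p.x p₁.k := by rw [hEqc]; exact p.path_vertex (by omega)
      exact (inter_not_vertex hsep ⟨hs0, hsk, ht0, htk, hpq⟩).1 p₁.k (by omega) hvert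
    · right
      refine ⟨by rw [← hc2]; exact hgt, by rw [← hkeq]; exact hsk, ht0, htk, ?_⟩
      rw [← path_agree_right hk hs₂ hx₂ (by rw [← hc2]; linarith) (by rw [← hkeq]; exact hsk)]
      exact hpq
  · rintro (hI | hI)
    · obtain ⟨hs0, hsk, ht0, htk, hpq⟩ := hI
      have hmid2 : p.s p₁.k < p.s p.k := p.s_lt_s p₁.k p.k (by omega) le_rfl
      refine ⟨by rw [h0eq]; exact hs0, ?_, ht0, htk, ?_⟩
      · have h := hsk; rw [← hc1] at h; linarith
      · rw [path_agree_left (by omega) hs₁ hx₁ (le_of_lt hs0) hsk]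
        exact hpq
    · obtain ⟨hs0, hsk, ht0, htk, hpq⟩ := hI
      have hmid1 : p.s 0 < p.s p₁.k := p.s_lt_s 0 p₁.k (by omega) (by omega)
      refine ⟨?_, by rw [hkeq]; exact hsk, ht0, htk, ?_⟩
      · have h := hs0; rw [← hc2] at h; linarith
      · rw [path_agree_right hk hs₂ hx₂ (le_of_lt hs0) hsk]
        exact hpq

lemma CN_split {p p₁ p₂ q : Track} (hsep : WSep p q) (hsep₁ : WSep p₁ q) (hsep₂ : WSep p₂ q)
    (hk : p.k = p₁.k + p₂.k) (hk₁ : 1 ≤ p₁.k) (hk₂ : 1 ≤ p₂.k)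
    (hs₁ : ∀ i ≤ p₁.k, p.s i = p₁.s i) (hx₁ : ∀ i ≤ p₁.k, p.x i = p₁.x i)
    (hs₂ : ∀ i ≤ p₂.k, p.s (p₁.k + i) = p₂.s i) (hx₂ : ∀ i ≤ p₂.k, p.x (p₁.k + i) = p₂.x i) :
    CN p q = CN p₁ q + CN p₂ q := by
  have hc : p₁.s p₁.k = p₂.s 0 := by
    rw [← hs₁ p₁.k le_rfl]
    have h := hs₂ 0 (by omega); rw [Nat.add_zero] at h; rw [h]
  have hset : ∀ (r w : Track), WSep r w →
      {st : ℝ × ℝ | IsCrossing r w st.1 st.2} = {st | IsInter r w st.1 st.2} := by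
    intro r w hrw
    ext st
    exact ⟨fun h => h.1, fun h => isCrossing_of_isInter hrw h⟩
  have hdisj : Disjoint {st : ℝ × ℝ | IsInter p₁ q st.1 st.2} {st | IsInter p₂ q st.1 st.2} := by
    rw [Set.disjoint_left]
    rintro ⟨s, t⟩ h1 h2
    have ha : IsInter p₁ q s t := h1
    have hb : IsInter p₂ q s t := h2
    have ha' := ha.2.1
    have hb' := hb.1
    rw [hc] at ha'
    linarith
  unfold CN
  rw [hset p q hsep, hset p₁ q hsep₁, hset p₂ q hsep₂,
    inter_split hsep hk hk₁ hk₂ hs₁ hx₁ hs₂ hx₂,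
    Set.ncard_union_eq hdisj (inter_finite hsep₁) (inter_finite hsep₂)]
lemma ds_le {A B : Set Plane} {a b : Plane} (ha : a ∈ A) (hb : b ∈ B) : ds A B ≤ ‖a - b‖ := by
  apply csInf_le
  · refine ⟨0, ?_⟩
    rintro r ⟨a', _, b', _, rfl⟩
    positivity
  · exact ⟨a, ha, b, hb, rfl⟩

lemma le_ds {A B : Set Plane} (hA : A.Nonempty) (hB : B.Nonempty) {m : ℝ}
    (h : ∀ a ∈ A, ∀ b ∈ B, m ≤ ‖a - b‖) : m ≤ ds A B := by
  apply le_csInf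
  · obtain ⟨a, ha⟩ := hA
    obtain ⟨b, hb⟩ := hB
    exact ⟨‖a - b‖, a, ha, b, hb, rfl⟩
  · rintro r ⟨a, ha, b, hb, rfl⟩
    exact h a ha b hb

lemma alpha_sub_pos (f g : ℝ → Plane) {aI bI aJ bJ u w : ℝ}
    (hJab : aJ ≤ bJ)
    (hsub : Set.Icc u w ⊆ Set.Icc aI bI) (huw : u ≤ w)
    (hα : 0 < alphaIJ f g aI bI aJ bJ)
    {βu βw : ℝ} (hβu : 0 < βu) (hβw : 0 < βw)
    (hu : ∀ y ∈ g '' Set.Icc aJ bJ, βu ≤ ‖f u - y‖)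
    (hw : ∀ y ∈ g '' Set.Icc aJ bJ, βw ≤ ‖f w - y‖) :
    0 < alphaIJ f g u w aJ bJ := by
  have hJne : (g '' Set.Icc aJ bJ).Nonempty :=
    ⟨g aJ, Set.mem_image_of_mem g (Set.left_mem_Icc.mpr hJab)⟩
  have hIne : (f '' Set.Icc u w).Nonempty :=
    ⟨f u, Set.mem_image_of_mem f (Set.left_mem_Icc.mpr huw)⟩
  apply lt_min
  · refine lt_of_lt_of_le (show (0:ℝ) < min βu βw from lt_min hβu hβw) ?_
    apply le_ds ⟨f u, Set.mem_insert _ _⟩ hJne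
    intro a ha y hy
    rcases ha with rfl | ha
    · exact le_trans (min_le_left _ _) (hu y hy)
    · rw [Set.mem_singleton_iff] at ha
      subst ha
      exact le_trans (min_le_right _ _) (hw y hy)
  · have hα2 : 0 < ds {g aJ, g bJ} (f '' Set.Icc aI bI) :=
      lt_of_lt_of_le hα (min_le_right _ _)
    refine lt_of_lt_of_le hα2 ?_
    apply le_ds ⟨g aJ, Set.mem_insert _ _⟩ hIne
    intro a ha y hy
    exact ds_le ha (Set.image_mono hsub hy)
theorem parity_additive_under_splitting (f g : ℝ → Plane)
    (hf : ContinuousOn f (Set.Icc (-1:ℝ) 2)) (hg : ContinuousOn g (Set.Icc (-1:ℝ) 2))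
    (md : ℕ → ℕ) (hmd : IsModulus2 f g md)
    (aI bI aJ bJ c : ℝ) (hIab : aI ≤ bI) (hJab : aJ ≤ bJ)
    (hI : Set.Icc aI bI ⊆ Set.Icc (-1:ℝ) 2) (hJ : Set.Icc aJ bJ ⊆ Set.Icc (-1:ℝ) 2)
    (hα : 0 < alphaIJ f g aI bI aJ bJ)
    (hc1 : aI < c) (hc2 : c < bI) (hfc : f c ∉ g '' Set.Icc aJ bJ)
    (b b₁ b₂ : ℕ)
    (hb : ParityIs f g md aI bI aJ bJ b)
    (hb₁ : ParityIs f g md aI c aJ bJ b₁)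
    (hb₂ : ParityIs f g md c bI aJ bJ b₂) :
    b = (b₁ + b₂) % 2 := by
  classical
  have hJne : (g '' Set.Icc aJ bJ).Nonempty :=
    ⟨g aJ, Set.mem_image_of_mem g (Set.left_mem_Icc.mpr hJab)⟩
  have hcomp : IsCompact (g '' Set.Icc aJ bJ) :=
    isCompact_Icc.image_of_continuousOn (hg.mono hJ)
  have hβ : 0 < Metric.infDist (f c) (g '' Set.Icc aJ bJ) :=
    (hcomp.isClosed.notMem_iff_infDist_pos hJne).mp hfc
  have hαdef : alphaIJ f g aI bI aJ bJ = min (ds {f aI, f bI} (g '' Set.Icc aJ bJ))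
      (ds {g aJ, g bJ} (f '' Set.Icc aI bI)) := rfl
  have hfa : ∀ y ∈ g '' Set.Icc aJ bJ, alphaIJ f g aI bI aJ bJ ≤ ‖f aI - y‖ := by
    intro y hy
    rw [hαdef]
    exact le_trans (min_le_left _ _) (ds_le (Set.mem_insert _ _) hy)
  have hfb : ∀ y ∈ g '' Set.Icc aJ bJ, alphaIJ f g aI bI aJ bJ ≤ ‖f bI - y‖ := by
    intro y hy
    rw [hαdef]
    exact le_trans (min_le_left _ _) (ds_le (Set.mem_insert_of_mem _ rfl) hy)
  have hfc' : ∀ y ∈ g '' Set.Icc aJ bJ, Metric.infDist (f c) (g '' Set.Icc aJ bJ) ≤ ‖f c - y‖ := by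
    intro y hy
    rw [← dist_eq_norm]
    exact Metric.infDist_le_dist_of_mem hy
  have hα₁ : 0 < alphaIJ f g aI c aJ bJ :=
    alpha_sub_pos f g hJab (Set.Icc_subset_Icc le_rfl (le_of_lt hc2)) (le_of_lt hc1)
      hα hα hβ hfa hfc'
  have hα₂ : 0 < alphaIJ f g c bI aJ bJ :=
    alpha_sub_pos f g hJab (Set.Icc_subset_Icc (le_of_lt hc1) le_rfl) (le_of_lt hc2)
      hα hβ hα hfc' hfb
  set αm := min (min (alphaIJ f g aI bI aJ bJ) (alphaIJ f g aI c aJ bJ))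
    (alphaIJ f g c bI aJ bJ) with hαm
  have hαmpos : 0 < αm := lt_min (lt_min hα hα₁) hα₂
  obtain ⟨n, hn⟩ := exists_pow_lt_of_lt_one (show (0:ℝ) < αm / 16 by positivity)
    (show (1/2 : ℝ) < 1 by norm_num)
  have hε : (0:ℝ) < (2:ℝ) ^ (-(n:ℤ)) := by positivity
  set ε := (2:ℝ) ^ (-(n:ℤ)) with hεdef
  have hthr : ε < αm / 16 := by
    rw [hεdef, show (2:ℝ) ^ (-(n:ℤ)) = (1/2 : ℝ) ^ n by
      rw [zpow_neg, zpow_natCast, one_div, inv_pow]]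
    exact hn
  have hthr1 : ε < alphaIJ f g aI bI aJ bJ / 16 := by
    have h1 : αm ≤ alphaIJ f g aI bI aJ bJ := le_trans (min_le_left _ _) (min_le_left _ _)
    linarith
  have hthr2 : ε < alphaIJ f g aI c aJ bJ / 16 := by
    have h1 : αm ≤ alphaIJ f g aI c aJ bJ := le_trans (min_le_left _ _) (min_le_right _ _)
    linarith
  have hthr3 : ε < alphaIJ f g c bI aJ bJ / 16 := by
    have h1 : αm ≤ alphaIJ f g c bI aJ bJ := min_le_right _ _
    linarith
  set m := (2:ℝ) ^ (-(md n : ℤ)) with hmdef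
  have hm : (0:ℝ) < m := by rw [hmdef]; positivity
  -- choose N
  obtain ⟨N, hN⟩ := exists_nat_gt (max ((c - aI) / m) ((bI - c) / m))
  have hNpos : 0 < N := by
    have h0 : (0:ℝ) < (c - aI) / m := div_pos (by linarith) hm
    have h1 : (0:ℝ) < (N:ℝ) := lt_of_lt_of_le h0 (le_of_lt (lt_of_le_of_lt (le_max_left _ _) hN))
    exact_mod_cast h1
  have hNR : (0:ℝ) < (N:ℝ) := by exact_mod_cast hNpos
  set h₁ := (c - aI) / N with hh₁def
  set h₂ := (bI - c) / N with hh₂def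
  have hh₁pos : 0 < h₁ := div_pos (by linarith) hNR
  have hh₂pos : 0 < h₂ := div_pos (by linarith) hNR
  have hh₁m : h₁ < m := by
    rw [hh₁def, div_lt_iff₀ hNR]
    have := (div_lt_iff₀ hm).mp (lt_of_le_of_lt (le_max_left ((c - aI)/m) ((bI - c)/m)) hN)
    linarith
  have hh₂m : h₂ < m := by
    rw [hh₂def, div_lt_iff₀ hNR]
    have := (div_lt_iff₀ hm).mp (lt_of_le_of_lt (le_max_right ((c - aI)/m) ((bI - c)/m)) hN)
    linarith
  have hch₁ : aI + (N:ℝ) * h₁ = c := by rw [hh₁def]; field_simp; ring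
  have hch₂ : c + (N:ℝ) * h₂ = bI := by rw [hh₂def]; field_simp; ring
  -- choose M and step for J
  obtain ⟨M, hJs, hMsum, hMpos, hMlt⟩ : ∃ (M : ℕ) (hJs : ℝ),
      aJ + (M:ℝ) * hJs = bJ ∧ (0 < M → 0 < hJs) ∧ hJs < m := by
    rcases eq_or_lt_of_le hJab with heq | hlt
    · exact ⟨0, 0, by rw [← heq]; simp, fun h => absurd h (by omega), hm⟩
    · obtain ⟨M, hM⟩ := exists_nat_gt ((bJ - aJ) / m)
      have hMpos' : 0 < M := by
        have h0 : (0:ℝ) < (bJ - aJ) / m := div_pos (by linarith) hm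
        have h1 : (0:ℝ) < (M:ℝ) := lt_trans h0 hM
        exact_mod_cast h1
      have hMR : (0:ℝ) < (M:ℝ) := by exact_mod_cast hMpos'
      refine ⟨M, (bJ - aJ) / M, by field_simp; ring, fun _ => div_pos (by linarith) hMR, ?_⟩
      rw [div_lt_iff₀ hMR]
      have := (div_lt_iff₀ hm).mp hM
      linarith
  -- grid for p
  set pS : ℕ → ℝ := fun i => if i ≤ N then aI + (i:ℝ) * h₁ else c + ((i - N : ℕ):ℝ) * h₂
    with hpSdef
  have hpS_left : ∀ i ≤ N, pS i = aI + (i:ℝ) * h₁ := fun i hi => if_pos hi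
  have hpS_right : ∀ i ≤ N, pS (N + i) = c + (i:ℝ) * h₂ := by
    intro i hi
    rcases Nat.eq_zero_or_pos i with rfl | hpos
    · rw [Nat.add_zero, hpS_left N le_rfl, hch₁]
      push_cast
      ring
    · rw [show pS (N + i) = c + ((N + i - N : ℕ):ℝ) * h₂ from if_neg (by omega),
        show (N + i - N : ℕ) = i by omega]
  have hpS0 : pS 0 = aI := by rw [hpS_left 0 (by omega)]; push_cast; ring
  have hpS2N : pS (2 * N) = bI := by
    rw [show (2 * N : ℕ) = N + N by omega, hpS_right N le_rfl, hch₂]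
  have hpS_mono : ∀ i < 2 * N, pS i < pS (i + 1) := by
    intro i hi
    by_cases hb1 : i + 1 ≤ N
    · rw [hpS_left (i+1) hb1, hpS_left i (by omega)]
      push_cast
      linarith [hh₁pos]
    · by_cases hb2 : i ≤ N
      · have hiN : i = N := by omega
        rw [hiN, hpS_left N le_rfl, hpS_right 1 (by omega), hch₁]
        push_cast
        linarith [hh₂pos]
      · rw [show pS i = c + ((i - N : ℕ):ℝ) * h₂ from if_neg hb2,
          show pS (i+1) = c + ((i + 1 - N : ℕ):ℝ) * h₂ from if_neg (by omega),
          show (i + 1 - N : ℕ) = (i - N) + 1 by omega]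
        push_cast
        linarith [hh₂pos]
  have hpS_step : ∀ i < 2 * N, pS (i + 1) - pS i < m := by
    intro i hi
    by_cases hb1 : i + 1 ≤ N
    · rw [hpS_left (i+1) hb1, hpS_left i (by omega)]
      push_cast
      linarith [hh₁m]
    · by_cases hb2 : i ≤ N
      · have hiN : i = N := by omega
        rw [hiN, hpS_left N le_rfl, hpS_right 1 (by omega), hch₁]
        push_cast
        linarith [hh₂m]
      · rw [show pS i = c + ((i - N : ℕ):ℝ) * h₂ from if_neg hb2,
          show pS (i+1) = c + ((i + 1 - N : ℕ):ℝ) * h₂ from if_neg (by omega),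
          show (i + 1 - N : ℕ) = (i - N) + 1 by omega]
        push_cast
        linarith [hh₂m]
  -- targets and general position points
  set T : ℕ → Plane := fun m' => if m' ≤ M then g (aJ + (m':ℝ) * hJs)
    else f (pS (m' - (M + 1))) with hTdef
  obtain ⟨v, hv⟩ := exists_gp T hε (M + 2 * N + 1)
  have hdist := gp_distinct (M := M + 2 * N + 1) (fun m' hm' => (hv m' hm').2.1)
  have hcol := gp_noncollinear hdist (fun m' hm' => (hv m' hm').2.2)
  have happ : ∀ m' ≤ M + 2 * N + 1, ‖v m' - T m'‖ < ε := fun m' hm' => (hv m' hm').1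
  -- the tracks
  let qT : Track :=
    { k := M, s := fun j => aJ + (j:ℝ) * hJs, x := fun j => v j,
      mono := by
        intro i hi
        have hp := hMpos (by omega)
        show aJ + (i:ℝ) * hJs < aJ + ((i+1:ℕ):ℝ) * hJs
        push_cast
        linarith
      ne := fun i hi => hdist i (i+1) (by omega) (by omega) (by omega) }
  let p1T : Track :=
    { k := N, s := fun i => aI + (i:ℝ) * h₁, x := fun i => v (M + 1 + i),
      mono := by
        intro i hi
        show aI + (i:ℝ) * h₁ < aI + ((i+1:ℕ):ℝ) * h₁
        push_cast
        linarith [hh₁pos]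
      ne := fun i hi => hdist (M+1+i) (M+1+(i+1)) (by omega) (by omega) (by omega) }
  let p2T : Track :=
    { k := N, s := fun i => c + (i:ℝ) * h₂, x := fun i => v (M + 1 + N + i),
      mono := by
        intro i hi
        show c + (i:ℝ) * h₂ < c + ((i+1:ℕ):ℝ) * h₂
        push_cast
        linarith [hh₂pos]
      ne := fun i hi => hdist (M+1+N+i) (M+1+N+(i+1)) (by omega) (by omega) (by omega) }
  let pT : Track :=
    { k := 2 * N, s := pS, x := fun i => v (M + 1 + i),
      mono := hpS_mono,
      ne := fun i hi => hdist (M+1+i) (M+1+(i+1)) (by omega) (by omega) (by omega) }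
  -- weak separation
  have hsep_pq : WSep pT qT := by
    constructor
    · apply Set.eq_empty_iff_forall_notMem.mpr
      rintro z ⟨⟨i, hi, rfl⟩, ⟨j, hj, hmem⟩⟩
      have hi' : i ≤ 2 * N := hi
      have hj' : j < M := hj
      exact hcol (M+1+i) j (j+1) (by omega) (by omega) (by omega) (by omega) (by omega)
        (by omega) hmem
    · apply Set.eq_empty_iff_forall_notMem.mpr
      rintro z ⟨⟨j, hj, rfl⟩, ⟨i, hi, hmem⟩⟩
      have hj' : j ≤ M := hj
      have hi' : i < 2 * N := hi
      exact hcol j (M+1+i) (M+1+(i+1)) (by omega) (by omega) (by omega) (by omega) (by omega)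
        (by omega) hmem
  have hsep_p1q : WSep p1T qT := by
    constructor
    · apply Set.eq_empty_iff_forall_notMem.mpr
      rintro z ⟨⟨i, hi, rfl⟩, ⟨j, hj, hmem⟩⟩
      have hi' : i ≤ N := hi
      have hj' : j < M := hj
      exact hcol (M+1+i) j (j+1) (by omega) (by omega) (by omega) (by omega) (by omega)
        (by omega) hmem
    · apply Set.eq_empty_iff_forall_notMem.mpr
      rintro z ⟨⟨j, hj, rfl⟩, ⟨i, hi, hmem⟩⟩
      have hj' : j ≤ M := hj
      have hi' : i < N := hi
      exact hcol j (M+1+i) (M+1+(i+1)) (by omega) (by omega) (by omega) (by omega) (by omega)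
        (by omega) hmem
  have hsep_p2q : WSep p2T qT := by
    constructor
    · apply Set.eq_empty_iff_forall_notMem.mpr
      rintro z ⟨⟨i, hi, rfl⟩, ⟨j, hj, hmem⟩⟩
      have hi' : i ≤ N := hi
      have hj' : j < M := hj
      exact hcol (M+1+N+i) j (j+1) (by omega) (by omega) (by omega) (by omega) (by omega)
        (by omega) hmem
    · apply Set.eq_empty_iff_forall_notMem.mpr
      rintro z ⟨⟨j, hj, rfl⟩, ⟨i, hi, hmem⟩⟩
      have hj' : j ≤ M := hj
      have hi' : i < N := hi
      exact hcol j (M+1+N+i) (M+1+N+(i+1)) (by omega) (by omega) (by omega) (by omega)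
        (by omega) (by omega) hmem
  -- approximations
  have happ_q : IsApprox g md aJ bJ n qT := by
    refine ⟨by show aJ + ((0:ℕ):ℝ) * hJs = aJ; push_cast; ring,
      by show aJ + (M:ℝ) * hJs = bJ; exact hMsum, ?_, ?_⟩
    · intro i hi
      show aJ + ((i+1:ℕ):ℝ) * hJs - (aJ + (i:ℝ) * hJs) < (2:ℝ) ^ (-(md n : ℤ))
      push_cast
      rw [← hmdef]
      linarith [hMlt]
    · intro i hi
      have hi' : i ≤ M := hi
      show ‖g (aJ + (i:ℝ) * hJs) - v i‖ < (2:ℝ) ^ (-(n:ℤ))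
      rw [norm_sub_rev, ← hεdef]
      have h := happ i (by omega)
      rwa [show T i = g (aJ + (i:ℝ) * hJs) from if_pos (by omega)] at h
  have happ_p1 : IsApprox f md aI c n p1T := by
    refine ⟨by show aI + ((0:ℕ):ℝ) * h₁ = aI; push_cast; ring,
      by show aI + (N:ℝ) * h₁ = c; exact hch₁, ?_, ?_⟩
    · intro i hi
      show aI + ((i+1:ℕ):ℝ) * h₁ - (aI + (i:ℝ) * h₁) < (2:ℝ) ^ (-(md n : ℤ))
      push_cast
      rw [← hmdef]
      linarith [hh₁m]
    · intro i hi
      have hi' : i ≤ N := hi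
      show ‖f (aI + (i:ℝ) * h₁) - v (M + 1 + i)‖ < (2:ℝ) ^ (-(n:ℤ))
      rw [norm_sub_rev, ← hεdef]
      have h := happ (M + 1 + i) (by omega)
      rwa [show T (M + 1 + i) = f (pS i) from by
          rw [hTdef]
          simp only [if_neg (show ¬ (M + 1 + i ≤ M) by omega)]
          rw [show (M + 1 + i - (M + 1) : ℕ) = i by omega],
        hpS_left i hi] at h
  have happ_p2 : IsApprox f md c bI n p2T := by
    refine ⟨by show c + ((0:ℕ):ℝ) * h₂ = c; push_cast; ring,
      by show c + (N:ℝ) * h₂ = bI; exact hch₂, ?_, ?_⟩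
    · intro i hi
      show c + ((i+1:ℕ):ℝ) * h₂ - (c + (i:ℝ) * h₂) < (2:ℝ) ^ (-(md n : ℤ))
      push_cast
      rw [← hmdef]
      linarith [hh₂m]
    · intro i hi
      have hi' : i ≤ N := hi
      show ‖f (c + (i:ℝ) * h₂) - v (M + 1 + N + i)‖ < (2:ℝ) ^ (-(n:ℤ))
      rw [norm_sub_rev, ← hεdef]
      have h := happ (M + 1 + N + i) (by omega)
      rwa [show T (M + 1 + N + i) = f (pS (N + i)) from by
          rw [hTdef]
          simp only [if_neg (show ¬ (M + 1 + N + i ≤ M) by omega)]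
          rw [show (M + 1 + N + i - (M + 1) : ℕ) = N + i by omega],
        hpS_right i hi] at h
  have happ_p : IsApprox f md aI bI n pT := by
    refine ⟨hpS0, hpS2N, ?_, ?_⟩
    · intro i hi
      show pS (i + 1) - pS i < (2:ℝ) ^ (-(md n : ℤ))
      rw [← hmdef]
      exact hpS_step i hi
    · intro i hi
      have hi' : i ≤ 2 * N := hi
      show ‖f (pS i) - v (M + 1 + i)‖ < (2:ℝ) ^ (-(n:ℤ))
      rw [norm_sub_rev, ← hεdef]
      have h := happ (M + 1 + i) (by omega)
      rwa [show T (M + 1 + i) = f (pS i) from by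
        rw [hTdef]
        simp only [if_neg (show ¬ (M + 1 + i ≤ M) by omega)]
        rw [show (M + 1 + i - (M + 1) : ℕ) = i by omega]] at h
  -- parities
  have hbv : par pT qT = b := hb n hthr1 pT qT happ_p happ_q hsep_pq
  have hb1v : par p1T qT = b₁ := hb₁ n hthr2 p1T qT happ_p1 happ_q hsep_p1q
  have hb2v : par p2T qT = b₂ := hb₂ n hthr3 p2T qT happ_p2 happ_q hsep_p2q
  -- counting
  have hsplit : CN pT qT = CN p1T qT + CN p2T qT := by
    refine CN_split hsep_pq hsep_p1q hsep_p2q (by show 2 * N = N + N; omega)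
      (by show 1 ≤ N; omega) (by show 1 ≤ N; omega) ?_ ?_ ?_ ?_
    · intro i hi
      exact hpS_left i hi
    · intro i hi
      rfl
    · intro i hi
      exact hpS_right i hi
    · intro i hi
      show v (M + 1 + (N + i)) = v (M + 1 + N + i)
      rw [show M + 1 + (N + i) = M + 1 + N + i by omega]
  rw [← hbv, ← hb1v, ← hb2v]
  show CN pT qT % 2 = (CN p1T qT % 2 + CN p2T qT % 2) % 2
  rw [hsplit, Nat.add_mod]

end
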